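/- Let A ∈ ℝ^{n×n} and B ∈ ℝ^{n×m} be such that there exists K ∈ ℝ^{m×n} with (A+BK)^k → 0 as k → ∞, let 𝒞 ⊆ ℝ^{n+m} be a proper C-set, and let S ⊆ ℝⁿ be a C-set. Let 𝒯₁ = (𝒞* ⊕ MᵀS)*, 𝒫₁ = P_x𝒯₁, and for k ≥ 1, 𝒯_{k+1} = (𝒞* ⊕ Mᵀ𝒫_k*)*, 𝒫_{k+1} = P_x𝒯_{k+1}. If either S ⊆ 𝒫₁* or 𝒫₁* ⊆ S, then there exist a proper C-set 𝒫_∞ ⊆ ℝⁿ and a proper C-set 𝒯_∞ ⊆ ℝ^{n+m} such that 𝒫_k → 𝒫_∞ and 𝒯_k → 𝒯_∞ in Hausdorff distance, 𝒯_∞ = (𝒞* ⊕ Mᵀ𝒫_∞*)*, 𝒫_∞ = P_x𝒯_∞, and consequently 𝒫_∞ solves the fixed-point set equation 𝒫_∞ = P_x(𝒞* ⊕ Mᵀ𝒫_∞*)*. -/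

import Mathlib

open Pointwise Filter Topology Matrix

noncomputable section

/-- ℝⁿ with the standard (Euclidean) inner product. -/
abbrev Rsp (n : ℕ) := EuclideanSpace ℝ (Fin n)

/-- ℝ^{n+m} realized as the L²-product ℝⁿ × ℝᵐ. -/
abbrev Rsp2 (n m : ℕ) := WithLp 2 (Rsp n × Rsp m)

/-- A C-set: compact, convex, containing the origin. -/
def IsCSet {E : Type*} [NormedAddCommGroup E] [NormedSpace ℝ E] (X : Set E) : Prop :=
  IsCompact X ∧ Convex ℝ X ∧ (0 : E) ∈ X

/-- A proper C-set: a C-set containing the origin in its interior. -/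
def IsProperCSet {E : Type*} [NormedAddCommGroup E] [NormedSpace ℝ E] (X : Set E) : Prop :=
  IsCSet X ∧ (0 : E) ∈ interior X

/-- The polar set 𝒳* = {y : ⟨y,x⟩ ≤ 1 for all x ∈ 𝒳}. -/
def polarSet {E : Type*} [NormedAddCommGroup E] [InnerProductSpace ℝ E] (X : Set E) : Set E :=
  {y | ∀ x ∈ X, inner ℝ y x ≤ (1 : ℝ)}

/-- The Minkowski (gauge) function γ(𝒳,y) = inf{η ≥ 0 : y ∈ η𝒳}. -/
def mgauge {E : Type*} [NormedAddCommGroup E] [NormedSpace ℝ E] (X : Set E) (y : E) : ℝ :=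
  sInf {η : ℝ | 0 ≤ η ∧ y ∈ η • X}

variable {n m : ℕ}

/-- The map M = (A B) : ℝ^{n+m} → ℝⁿ, M(x,u) = Ax + Bu. -/
def Mfwd (A : Matrix (Fin n) (Fin n) ℝ) (B : Matrix (Fin n) (Fin m) ℝ) (w : Rsp2 n m) : Rsp n :=
  Matrix.toEuclideanLin A w.ofLp.1 + Matrix.toEuclideanLin B w.ofLp.2

/-- The transpose map Mᵀ : ℝⁿ → ℝ^{n+m}, Mᵀp = (Aᵀp, Bᵀp). -/
def Mtr (A : Matrix (Fin n) (Fin n) ℝ) (B : Matrix (Fin n) (Fin m) ℝ) (p : Rsp n) : Rsp2 n m :=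
  WithLp.toLp 2 (Matrix.toEuclideanLin Aᵀ p, Matrix.toEuclideanLin Bᵀ p)

/-- The projection P_x : ℝ^{n+m} → ℝⁿ, (x,u) ↦ x. -/
def Pxproj : Rsp2 n m → Rsp n := fun w => w.ofLp.1

set_option synthInstance.maxHeartbeats 1000000
set_option maxHeartbeats 1000000

section Polar
variable {E : Type*} [NormedAddCommGroup E] [InnerProductSpace ℝ E] {X Y : Set E}

lemma zero_mem_polarSet : (0 : E) ∈ polarSet X := by
  intro x hx; simp

lemma polarSet_antitone (h : X ⊆ Y) : polarSet Y ⊆ polarSet X :=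
  fun y hy x hx => hy x (h hx)

lemma isClosed_polarSet : IsClosed (polarSet X) := by
  have : polarSet X = ⋂ x ∈ X, {y : E | inner ℝ y x ≤ (1:ℝ)} := by
    ext y; simp [polarSet]
  rw [this]
  exact isClosed_biInter fun x _ =>
    isClosed_le (Continuous.inner continuous_id continuous_const) continuous_const

lemma convex_polarSet : Convex ℝ (polarSet X) := by
  intro y hy z hz a b ha hb hab x hx
  have h1 := hy x hx
  have h2 := hz x hx
  rw [inner_add_left, real_inner_smul_left, real_inner_smul_left]
  nlinarith

lemma norm_le_of_mem_polarSet {ρ : ℝ} (hρ : 0 < ρ) (hball : Metric.ball (0:E) ρ ⊆ X)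
    {c : E} (hc : c ∈ polarSet X) : ‖c‖ ≤ 1 / ρ := by
  rcases eq_or_ne c 0 with rfl | hc0
  · simp; positivity
  · have hcn : (0:ℝ) < ‖c‖ := norm_pos_iff.2 hc0
    by_contra h
    push_neg at h
    have hlt : 1 / ‖c‖ < ρ := by
      rw [div_lt_iff₀ hcn]
      have := (div_lt_iff₀ hρ).1 h
      linarith
    obtain ⟨ρ', h1, h2⟩ := exists_between hlt
    have h1' : 0 < ρ' := lt_trans (by positivity) h1
    have hmem : (ρ' / ‖c‖) • c ∈ Metric.ball (0:E) ρ := by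
      simp only [Metric.mem_ball, dist_zero_right, norm_smul, Real.norm_eq_abs,
        abs_div, abs_of_pos h1', abs_of_pos hcn]
      rw [div_mul_cancel₀ _ (ne_of_gt hcn)]
      exact h2
    have hle := hc _ (hball hmem)
    rw [real_inner_smul_right, real_inner_self_eq_norm_sq] at hle
    have hgt : 1 < ρ' * ‖c‖ := by
      rw [div_lt_iff₀ hcn] at h1; linarith
    have : ρ' / ‖c‖ * ‖c‖ ^ 2 = ρ' * ‖c‖ := by
      field_simp
    linarith [hle, this]

lemma ball_subset_polarSet {R : ℝ} (hR : 0 < R) (hX : ∀ x ∈ X, ‖x‖ ≤ R) :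
    Metric.ball (0:E) (1/R) ⊆ polarSet X := by
  intro y hy x hx
  simp only [Metric.mem_ball, dist_zero_right] at hy
  calc inner ℝ y x ≤ ‖y‖ * ‖x‖ := real_inner_le_norm y x
    _ ≤ (1/R) * R := by
        apply mul_le_mul (le_of_lt hy) (hX x hx) (norm_nonneg x) (by positivity)
    _ = 1 := by field_simp

end Polar

section Bipolar
variable {E : Type*} [NormedAddCommGroup E] [InnerProductSpace ℝ E] {X Y : Set E}

lemma subset_bipolar : X ⊆ polarSet (polarSet X) := by
  intro x hx y hy
  rw [real_inner_comm]
  exact hy x hx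

lemma bipolar [CompleteSpace E] (hcl : IsClosed X) (hcv : Convex ℝ X) (h0 : (0:E) ∈ X) :
    polarSet (polarSet X) = X := by
  refine le_antisymm ?_ subset_bipolar
  intro z hz
  by_contra hzX
  obtain ⟨f, u, hfb, hfz⟩ := geometric_hahn_banach_closed_point hcv hcl hzX
  have hu0 : 0 < u := by simpa using hfb 0 h0
  set v := (InnerProductSpace.toDual ℝ E).symm f with hv
  have hvx : ∀ x : E, inner ℝ v x = f x := fun x => InnerProductSpace.toDual_symm_apply
  have hmem : u⁻¹ • v ∈ polarSet X := by
    intro x hx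
    rw [real_inner_smul_left, hvx]
    rw [inv_mul_le_iff₀ hu0]
    simpa using le_of_lt (hfb x hx)
  have := hz _ hmem
  rw [real_inner_smul_right, real_inner_comm, hvx] at this
  rw [inv_mul_le_iff₀ hu0] at this
  simp at this
  linarith

lemma polarSet_union_eq {ι : Sort*} (Xs : ι → Set E) :
    polarSet (⋃ i, Xs i) = ⋂ i, polarSet (Xs i) := by
  ext y
  simp only [polarSet, Set.mem_iInter, Set.mem_setOf_eq, Set.mem_iUnion]
  constructor
  · intro h i x hx; exact h x ⟨i, hx⟩
  · rintro h x ⟨i, hx⟩; exact h i x hx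

lemma polarSet_closure_eq : polarSet (closure X) = polarSet X := by
  refine le_antisymm (polarSet_antitone subset_closure) ?_
  intro y hy x hx
  have hcl : IsClosed {x : E | inner ℝ y x ≤ (1:ℝ)} :=
    isClosed_le (Continuous.inner continuous_const continuous_id) continuous_const
  exact closure_minimal (fun x' hx' => hy x' hx') hcl hx

end Bipolar

section Haus
open Metric
variable {α : Type*} [MetricSpace α]

lemma haus_decreasing (K : ℕ → Set α) (hc : ∀ k, IsCompact (K k)) (hne : ∀ k, (K k).Nonempty)
    (hanti : Antitone K) :
    Tendsto (fun k => hausdorffDist (K k) (⋂ i, K i)) atTop (nhds 0) := by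
  set I := ⋂ i, K i with hI
  have hIne : I.Nonempty :=
    IsCompact.nonempty_iInter_of_sequence_nonempty_isCompact_isClosed K
      (fun k => hanti (Nat.le_succ k)) hne (hc 0) (fun k => (hc k).isClosed)
  rw [Metric.tendsto_atTop]
  intro ε hε
  have hεh : 0 < ε / 2 := by linarith
  obtain ⟨N, hN⟩ : ∃ N, K N ⊆ thickening (ε/2) I := by
    apply exists_subset_nhds_of_isCompact' (fun i j => ?_) hc (fun k => (hc k).isClosed)
    · intro x hx
      exact (isOpen_thickening.mem_nhds (self_subset_thickening hεh I hx))
    · exact ⟨max i j, hanti (le_max_left i j), hanti (le_max_right i j)⟩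
  refine ⟨N, fun k hk => ?_⟩
  rw [Real.dist_eq, sub_zero, abs_of_nonneg hausdorffDist_nonneg]
  have hsub : K k ⊆ thickening (ε/2) I := (hanti hk).trans hN
  have hbound : hausdorffDist (K k) I ≤ ε / 2 := by
    apply hausdorffDist_le_of_infDist (le_of_lt hεh)
    · intro x hx
      exact le_of_lt ((mem_thickening_iff_infDist_lt hIne).1 (hsub hx))
    · intro y hy
      rw [infDist_zero_of_mem (Set.mem_iInter.1 hy k)]
      exact le_of_lt hεh
  linarith

lemma haus_increasing [ProperSpace α] (K : ℕ → Set α) (hc : ∀ k, IsCompact (K k))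
    (hne : ∀ k, (K k).Nonempty) (hmono : Monotone K)
    (hbdd : Bornology.IsBounded (⋃ i, K i)) :
    Tendsto (fun k => hausdorffDist (K k) (closure (⋃ i, K i))) atTop (nhds 0) := by
  set Q := closure (⋃ i, K i) with hQ
  have hQc : IsCompact Q := Metric.isCompact_of_isClosed_isBounded isClosed_closure hbdd.closure
  rw [Metric.tendsto_atTop]
  intro ε hε
  have hεh : 0 < ε / 2 := by linarith
  obtain ⟨N, hN⟩ : ∃ N, Q ⊆ thickening (ε/2) (K N) := by
    apply hQc.elim_directed_cover (fun j => thickening (ε/2) (K j))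
      (fun j => isOpen_thickening)
    · intro q hq
      obtain ⟨y, hy, hdy⟩ := Metric.mem_closure_iff.1 hq (ε/2) hεh
      obtain ⟨j, hj⟩ := Set.mem_iUnion.1 hy
      exact Set.mem_iUnion.2 ⟨j, Metric.mem_thickening_iff.2 ⟨y, hj, hdy⟩⟩
    · intro i j
      exact ⟨max i j, thickening_subset_of_subset _ (hmono (le_max_left i j)),
        thickening_subset_of_subset _ (hmono (le_max_right i j))⟩
  refine ⟨N, fun k hk => ?_⟩
  rw [Real.dist_eq, sub_zero, abs_of_nonneg hausdorffDist_nonneg]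
  have hsub : Q ⊆ thickening (ε/2) (K k) := hN.trans (thickening_subset_of_subset _ (hmono hk))
  have hbound : hausdorffDist (K k) Q ≤ ε / 2 := by
    apply hausdorffDist_le_of_infDist (le_of_lt hεh)
    · intro x hx
      rw [infDist_zero_of_mem (subset_closure (Set.mem_iUnion.2 ⟨k, hx⟩))]
      exact le_of_lt hεh
    · intro y hy
      exact le_of_lt ((mem_thickening_iff_infDist_lt (hne k)).1 (hsub hy))
  linarith

end Haus

section Sums

lemma pow_partial_sum {E : Type*} [NormedAddCommGroup E] [NormedSpace ℝ E]
    (T : E →L[ℝ] E) (N : ℕ) (hN : 1 ≤ N) (hTN : ‖T ^ N‖ ≤ 1/2) (k : ℕ) :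
    ∑ i ∈ Finset.range k, ‖T ^ i‖ ≤ 2 * ∑ i ∈ Finset.range N, ‖T ^ i‖ := by
  induction k using Nat.strong_induction_on with
  | _ k ih =>
    have hSN : (0:ℝ) ≤ ∑ i ∈ Finset.range N, ‖T ^ i‖ :=
      Finset.sum_nonneg fun i _ => norm_nonneg _
    rcases le_or_gt k N with hk | hk
    · calc ∑ i ∈ Finset.range k, ‖T ^ i‖ ≤ ∑ i ∈ Finset.range N, ‖T ^ i‖ :=
          Finset.sum_le_sum_of_subset_of_nonneg (Finset.range_subset_range.2 hk)
            (fun i _ _ => norm_nonneg _)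
        _ ≤ 2 * ∑ i ∈ Finset.range N, ‖T ^ i‖ := by linarith
    · have hkN : k = N + (k - N) := by omega
      have hsplit : ∑ i ∈ Finset.range k, ‖T ^ i‖
          = ∑ i ∈ Finset.range N, ‖T ^ i‖ + ∑ i ∈ Finset.range (k - N), ‖T ^ (N + i)‖ := by
        rw [hkN, Finset.sum_range_add]
        have : N + (k - N) - N = k - N := by omega
        rw [this]
      have hterm : ∀ i, ‖T ^ (N + i)‖ ≤ (1/2) * ‖T ^ i‖ := by
        intro i
        calc ‖T ^ (N + i)‖ = ‖T ^ N * T ^ i‖ := by rw [pow_add]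
          _ ≤ ‖T ^ N‖ * ‖T ^ i‖ := norm_mul_le _ _
          _ ≤ (1/2) * ‖T ^ i‖ := by
              apply mul_le_mul_of_nonneg_right hTN (norm_nonneg _)
      have h2 : ∑ i ∈ Finset.range (k - N), ‖T ^ (N + i)‖
          ≤ (1/2) * ∑ i ∈ Finset.range (k - N), ‖T ^ i‖ := by
        rw [Finset.mul_sum]
        exact Finset.sum_le_sum fun i _ => hterm i
      have h3 := ih (k - N) (by omega)
      rw [hsplit]
      linarith

end Sums

def mkW (x : Rsp n) (u : Rsp m) : Rsp2 n m := WithLp.toLp 2 (x, u)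

section Plumb
variable (A : Matrix (Fin n) (Fin n) ℝ) (B : Matrix (Fin n) (Fin m) ℝ)

lemma inner_Mtr (w : Rsp2 n m) (p : Rsp n) :
    (inner ℝ w (Mtr A B p) : ℝ) = inner ℝ (Mfwd A B w) p := by
  have h1 : (inner ℝ w (Mtr A B p) : ℝ)
      = inner ℝ w.fst (Matrix.toEuclideanLin Aᵀ p) + inner ℝ w.snd (Matrix.toEuclideanLin Bᵀ p) :=
    WithLp.prod_inner_apply w (Mtr A B p)
  have hA : Matrix.toEuclideanLin Aᵀ = LinearMap.adjoint (Matrix.toEuclideanLin A) := by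
    rw [← Matrix.conjTranspose_eq_transpose_of_trivial]
    exact Matrix.toEuclideanLin_conjTranspose_eq_adjoint A
  have hB : Matrix.toEuclideanLin Bᵀ = LinearMap.adjoint (Matrix.toEuclideanLin B) := by
    rw [← Matrix.conjTranspose_eq_transpose_of_trivial]
    exact Matrix.toEuclideanLin_conjTranspose_eq_adjoint B
  rw [h1, hA, hB, LinearMap.adjoint_inner_right, LinearMap.adjoint_inner_right]
  rw [Mfwd, inner_add_left]
  rfl

/-- The pair norm bounds. -/
lemma pair_norm_le (w : Rsp2 n m) : ‖w‖ ≤ ‖w.fst‖ + ‖w.snd‖ := by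
  rw [WithLp.prod_norm_eq_of_L2]
  have h : ‖w.fst‖ ^ 2 + ‖w.snd‖ ^ 2 ≤ (‖w.fst‖ + ‖w.snd‖) ^ 2 := by
    nlinarith [norm_nonneg w.fst, norm_nonneg w.snd]
  calc Real.sqrt (‖w.fst‖ ^ 2 + ‖w.snd‖ ^ 2) ≤ Real.sqrt ((‖w.fst‖ + ‖w.snd‖) ^ 2) :=
        Real.sqrt_le_sqrt h
    _ = ‖w.fst‖ + ‖w.snd‖ := by
        rw [Real.sqrt_sq (by positivity)]

lemma fst_norm_le (w : Rsp2 n m) : ‖w.fst‖ ≤ ‖w‖ := by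
  rw [WithLp.prod_norm_eq_of_L2]
  calc ‖w.fst‖ = Real.sqrt (‖w.fst‖ ^ 2) := (Real.sqrt_sq (norm_nonneg _)).symm
    _ ≤ Real.sqrt (‖w.fst‖ ^ 2 + ‖w.snd‖ ^ 2) := Real.sqrt_le_sqrt (by nlinarith [norm_nonneg w.snd])

def PxL : Rsp2 n m →ₗ[ℝ] Rsp n where
  toFun := Pxproj
  map_add' := fun _ _ => rfl
  map_smul' := fun _ _ => rfl

set_option synthInstance.maxHeartbeats 1000000 in
lemma continuous_Pxproj : Continuous (Pxproj : Rsp2 n m → Rsp n) :=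
  LinearMap.continuous_of_finiteDimensional (PxL (n := n) (m := m))

def MtrL : Rsp n →ₗ[ℝ] Rsp2 n m where
  toFun := Mtr A B
  map_add' := fun x y => by
    simp only [Mtr, map_add]
    rfl
  map_smul' := fun c x => by
    simp only [Mtr, _root_.map_smul, RingHom.id_apply]
    rfl

lemma continuous_Mtr : Continuous (Mtr A B : Rsp n → Rsp2 n m) :=
  LinearMap.continuous_of_finiteDimensional (MtrL A B)

def MtrCLM : Rsp n →L[ℝ] Rsp2 n m := LinearMap.toContinuousLinearMap (MtrL A B)

lemma Mtr_zero : Mtr A B (0 : Rsp n) = 0 := (MtrL A B).map_zero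

end Plumb

section Feedback
variable (A : Matrix (Fin n) (Fin n) ℝ) (B : Matrix (Fin n) (Fin m) ℝ)
  (K : Matrix (Fin m) (Fin n) ℝ)

def KCLM : Rsp n →L[ℝ] Rsp m := LinearMap.toContinuousLinearMap (Matrix.toEuclideanLin K)

def TKop : Rsp n →L[ℝ] Rsp n := Matrix.toEuclideanCLM (𝕜 := ℝ) (A + B * K)

lemma Mfwd_feedback (x : Rsp n) :
    Mfwd A B (mkW x (KCLM K x)) = TKop A B K x := by
  have h1 : TKop A B K x = Matrix.toEuclideanLin (A + B * K) x := by
    rw [TKop, ← Matrix.coe_toEuclideanCLM_eq_toEuclideanLin]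
    rfl
  rw [h1]
  show Matrix.toEuclideanLin A x + Matrix.toEuclideanLin B (KCLM K x)
      = Matrix.toEuclideanLin (A + B * K) x
  have h2 : (KCLM K x : Rsp m) = Matrix.toEuclideanLin K x := rfl
  rw [h2, map_add]
  congr 1
  rw [Matrix.toEuclideanLin_apply, Matrix.toEuclideanLin_apply, Matrix.toEuclideanLin_apply]
  simp [Matrix.mulVec_mulVec]

lemma TKop_pow_tendsto (htend : Tendsto (fun k : ℕ => (A + B * K) ^ k) atTop (nhds 0)) :
    Tendsto (fun k : ℕ => ‖(TKop A B K) ^ k‖) atTop (nhds 0) := by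
  have hlin : Continuous (fun M : Matrix (Fin n) (Fin n) ℝ =>
      Matrix.toEuclideanCLM (𝕜 := ℝ) M) := by
    let L : Matrix (Fin n) (Fin n) ℝ →ₗ[ℝ] (Rsp n →L[ℝ] Rsp n) :=
      { toFun := fun M => Matrix.toEuclideanCLM (𝕜 := ℝ) M
        map_add' := fun M N => by simp
        map_smul' := fun c M => by simp }
    exact LinearMap.continuous_of_finiteDimensional L
  have h1 : Tendsto (fun k : ℕ => Matrix.toEuclideanCLM (𝕜 := ℝ) ((A + B * K) ^ k))
      atTop (nhds 0) := by
    have h0 := (hlin.tendsto 0).comp htend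
    have : Matrix.toEuclideanCLM (𝕜 := ℝ) (0 : Matrix (Fin n) (Fin n) ℝ) = 0 := map_zero _
    rw [this] at h0
    exact h0
  have h2 : (fun k : ℕ => ‖(TKop A B K) ^ k‖)
      = fun k : ℕ => ‖Matrix.toEuclideanCLM (𝕜 := ℝ) ((A + B * K) ^ k)‖ := by
    funext k; rw [TKop, map_pow]
  rw [h2]
  have h3 := h1.norm
  rw [norm_zero] at h3
  exact h3

end Feedback

section Main
variable (A : Matrix (Fin n) (Fin n) ℝ) (B : Matrix (Fin n) (Fin m) ℝ)

def Dseq (S : Set (Rsp n)) (P : ℕ → Set (Rsp n)) : ℕ → Set (Rsp n)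
  | 0 => S
  | (k+1) => polarSet (P k)

variable {C : Set (Rsp2 n m)} {S : Set (Rsp n)} {T : ℕ → Set (Rsp2 n m)} {P : ℕ → Set (Rsp n)}

lemma hTD (hT0 : T 0 = polarSet (polarSet C + Mtr A B '' S))
    (hTs : ∀ k : ℕ, T (k + 1) = polarSet (polarSet C + Mtr A B '' polarSet (P k))) (k : ℕ) :
    T k = polarSet (polarSet C + Mtr A B '' Dseq S P k) := by
  cases k with
  | zero => exact hT0
  | succ k => exact hTs k

lemma zero_mem_Dseq (hS0 : (0:Rsp n) ∈ S) (k : ℕ) : (0:Rsp n) ∈ Dseq S P k := by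
  cases k with
  | zero => exact hS0
  | succ k => exact zero_mem_polarSet

lemma T_subset_C (hC : IsProperCSet C) (hS0 : (0:Rsp n) ∈ S)
    (hTD' : ∀ k, T k = polarSet (polarSet C + Mtr A B '' Dseq S P k)) (k : ℕ) :
    T k ⊆ C := by
  rw [hTD' k]
  have h1 : polarSet C ⊆ polarSet C + Mtr A B '' Dseq S P k := by
    intro c hc
    refine Set.mem_add.2 ⟨c, hc, 0, ⟨0, zero_mem_Dseq hS0 k, Mtr_zero A B⟩, add_zero c⟩
  have h2 := polarSet_antitone h1
  have h3 : polarSet (polarSet C) = C :=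
    bipolar hC.1.1.isClosed hC.1.2.1 hC.1.2.2
  rw [h3] at h2
  exact h2

lemma T_basic (hC : IsProperCSet C) (hS0 : (0:Rsp n) ∈ S)
    (hTD' : ∀ k, T k = polarSet (polarSet C + Mtr A B '' Dseq S P k)) (k : ℕ) :
    IsCompact (T k) ∧ Convex ℝ (T k) ∧ (0 : Rsp2 n m) ∈ T k ∧ T k ⊆ C := by
  have hsub := T_subset_C A B hC hS0 hTD' k
  refine ⟨IsCompact.of_isClosed_subset hC.1.1 (by rw [hTD' k]; exact isClosed_polarSet) hsub,
    ?_, ?_, hsub⟩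
  · rw [hTD' k]; exact convex_polarSet
  · rw [hTD' k]; exact zero_mem_polarSet

lemma P_basic (hC : IsProperCSet C) (hS0 : (0:Rsp n) ∈ S)
    (hTD' : ∀ k, T k = polarSet (polarSet C + Mtr A B '' Dseq S P k))
    (hPx : ∀ k, P k = Pxproj '' T k) (k : ℕ) :
    IsCompact (P k) ∧ Convex ℝ (P k) ∧ (0 : Rsp n) ∈ P k := by
  obtain ⟨hTc, hTcv, hT0m, _⟩ := T_basic A B hC hS0 hTD' k
  rw [hPx k]
  exact ⟨hTc.image continuous_Pxproj,
    hTcv.linear_image (PxL (n := n) (m := m)),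
    ⟨0, hT0m, rfl⟩⟩

end Main

section Ball
variable {C : Set (Rsp2 n m)} {S : Set (Rsp n)} {T : ℕ → Set (Rsp2 n m)} {P : ℕ → Set (Rsp n)}

lemma inner_ball (A : Matrix (Fin n) (Fin n) ℝ) (B : Matrix (Fin n) (Fin m) ℝ)
    (hC : IsProperCSet C) (hS : IsCSet S)
    (hTD' : ∀ k, T k = polarSet (polarSet C + Mtr A B '' Dseq S P k))
    (hPx : ∀ k, P k = Pxproj '' T k)
    (K : Matrix (Fin m) (Fin n) ℝ)
    (htend : Tendsto (fun k : ℕ => (A + B * K) ^ k) atTop (nhds 0)) :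
    ∃ ε > 0, ∀ k, Metric.ball (0 : Rsp n) ε ⊆ P k := by
  set TK := TKop A B K with hTKdef
  -- pick N with the norm of TK^N at most 1/2
  obtain ⟨N, hTN, hN1⟩ : ∃ N, ‖TK ^ N‖ ≤ 1/2 ∧ 1 ≤ N := by
    have h := (TKop_pow_tendsto A B K htend).eventually_lt_const (by norm_num : (0:ℝ) < 1/2)
    obtain ⟨N, hN⟩ := (h.and (eventually_ge_atTop 1)).exists
    exact ⟨N, le_of_lt hN.1, hN.2⟩
  set SN := ∑ i ∈ Finset.range N, ‖TK ^ i‖ with hSNdef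
  have hSN0 : 0 ≤ SN := Finset.sum_nonneg fun i _ => norm_nonneg _
  have hpart : ∀ k, ∑ i ∈ Finset.range k, ‖TK ^ i‖ ≤ 2 * SN :=
    fun k => pow_partial_sum TK N hN1 hTN k
  -- interior ball of C
  obtain ⟨ρ, hρpos, hball⟩ : ∃ ρ > 0, Metric.ball (0 : Rsp2 n m) ρ ⊆ C := by
    obtain ⟨U, hUC, hUopen, hU0⟩ := mem_interior.1 hC.2
    obtain ⟨ρ, hρpos, hB⟩ := Metric.isOpen_iff.1 hUopen 0 hU0
    exact ⟨ρ, hρpos, hB.trans hUC⟩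
  -- bound on S
  obtain ⟨d, hd0, hdS⟩ : ∃ d ≥ 0, ∀ s ∈ S, ‖s‖ ≤ d := by
    obtain ⟨r, hr⟩ := (Metric.isBounded_iff_subset_closedBall 0).1 hS.1.isBounded
    refine ⟨max r 0, le_max_right _ _, fun s hs => ?_⟩
    have := hr hs
    rw [Metric.mem_closedBall, dist_zero_right] at this
    exact this.trans (le_max_left _ _)
  set c0 : ℝ := (1 + ‖KCLM K‖) / ρ with hc0def
  have hc0 : 0 < c0 := by
    apply div_pos _ hρpos
    have := norm_nonneg (KCLM K)
    linarith
  set R : ℕ → Rsp n → ℝ := fun k x =>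
    c0 * ∑ i ∈ Finset.range (k+1), ‖(TK ^ i) x‖ + d * ‖(TK ^ (k+1)) x‖ with hRdef
  have hRnonneg : ∀ k x, 0 ≤ R k x := by
    intro k x
    have h1 : (0:ℝ) ≤ ∑ i ∈ Finset.range (k+1), ‖(TK ^ i) x‖ :=
      Finset.sum_nonneg fun i _ => norm_nonneg _
    have h2 := norm_nonneg ((TK ^ (k+1)) x)
    have := mul_nonneg (le_of_lt hc0) h1
    have := mul_nonneg hd0 h2
    simp only [hRdef]
    linarith
  have hRhom : ∀ k (t : ℝ) x, 0 ≤ t → R k (t • x) = t * R k x := by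
    intro k t x ht
    simp only [hRdef, _root_.map_smul, norm_smul, Real.norm_eq_abs, abs_of_nonneg ht,
      ← Finset.mul_sum]
    ring
  -- the inner ℝ product bound against polar C
  have hC_in : ∀ (x : Rsp n) (c : Rsp2 n m), c ∈ polarSet C →
      (inner ℝ (mkW x (KCLM K x)) c : ℝ) ≤ c0 * ‖x‖ := by
    intro x c hc
    have h1 : (inner ℝ (mkW x (KCLM K x)) c : ℝ) ≤ ‖(mkW x (KCLM K x))‖ * ‖c‖ :=
      real_inner_le_norm _ _
    have h2 : ‖(mkW x (KCLM K x))‖ ≤ (1 + ‖KCLM K‖) * ‖x‖ := by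
      have := pair_norm_le (mkW x (KCLM K x))
      have hKx : ‖KCLM K x‖ ≤ ‖KCLM K‖ * ‖x‖ := (KCLM K).le_opNorm x
      have : ‖(mkW x (KCLM K x))‖ ≤ ‖x‖ + ‖KCLM K x‖ := this
      nlinarith [norm_nonneg x]
    have h3 : ‖c‖ ≤ 1 / ρ := norm_le_of_mem_polarSet hρpos hball hc
    calc (inner ℝ (mkW x (KCLM K x)) c : ℝ)
        ≤ ‖(mkW x (KCLM K x))‖ * ‖c‖ := h1
      _ ≤ ((1 + ‖KCLM K‖) * ‖x‖) * (1 / ρ) := by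
          apply mul_le_mul h2 h3 (norm_nonneg _)
          positivity
      _ = c0 * ‖x‖ := by rw [hc0def]; ring
  -- membership helper
  have hmemP : ∀ (k : ℕ) (x : Rsp n),
      (mkW x (KCLM K x)) ∈ T k → x ∈ P k := by
    intro k x hm
    rw [hPx k]
    exact ⟨(mkW x (KCLM K x)), hm, rfl⟩
  have hinner_feed : ∀ (x : Rsp n) (p : Rsp n),
      (inner ℝ (mkW x (KCLM K x)) (Mtr A B p) : ℝ) = inner ℝ p (TK x) := by
    intro x p
    rw [inner_Mtr, Mfwd_feedback, real_inner_comm]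
  -- key induction
  have hkey : ∀ k x, R k x ≤ 1 → x ∈ P k := by
    intro k
    induction k with
    | zero =>
      intro x hx
      apply hmemP 0 x
      rw [hTD' 0]
      intro z hz
      rcases Set.mem_add.1 hz with ⟨c, hc, w', ⟨p, hp, rfl⟩, rfl⟩
      rw [inner_add_right, hinner_feed]
      have h1 := hC_in x c hc
      have h2 : (inner ℝ p (TK x) : ℝ) ≤ d * ‖TK x‖ := by
        calc (inner ℝ p (TK x) : ℝ) ≤ ‖p‖ * ‖TK x‖ := real_inner_le_norm _ _
          _ ≤ d * ‖TK x‖ :=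
            mul_le_mul_of_nonneg_right (hdS p hp) (norm_nonneg _)
      have h3 : R 0 x = c0 * ‖x‖ + d * ‖TK x‖ := by
        simp [hRdef, pow_one]
      linarith [hx, h3 ▸ hx]
    | succ k ih =>
      intro x hx
      apply hmemP (k+1) x
      rw [hTD' (k+1)]
      intro z hz
      rcases Set.mem_add.1 hz with ⟨c, hc, w', ⟨p, hp, rfl⟩, rfl⟩
      rw [inner_add_right, hinner_feed]
      have h1 := hC_in x c hc
      -- inner ℝ p (TK x) ≤ R k (TK x)
      have h2 : (inner ℝ p (TK x) : ℝ) ≤ R k (TK x) := by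
        by_contra hcon
        push_neg at hcon
        obtain ⟨t, ht1, ht2⟩ := exists_between hcon
        have ht0 : 0 < t := lt_of_le_of_lt (hRnonneg k (TK x)) ht1
        have hmem : t⁻¹ • (TK x) ∈ P k := by
          apply ih
          rw [hRhom k t⁻¹ (TK x) (le_of_lt (inv_pos.2 ht0))]
          rw [inv_mul_le_iff₀ ht0, mul_one]
          exact le_of_lt ht1
        have := hp _ hmem
        rw [real_inner_smul_right] at this
        have : (inner ℝ p (TK x) : ℝ) ≤ t := by
          calc (inner ℝ p (TK x) : ℝ) = t * (t⁻¹ * inner ℝ p (TK x)) := by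
                field_simp
            _ ≤ t * 1 := mul_le_mul_of_nonneg_left this (le_of_lt ht0)
            _ = t := mul_one t
        linarith
      -- assemble
      have h3 : c0 * ‖x‖ + R k (TK x) = R (k+1) x := by
        have hshift : ∀ i : ℕ, (TK ^ i) (TK x) = (TK ^ (i+1)) x := by
          intro i
          rw [pow_succ]
          rfl
        simp only [hRdef, hshift]
        rw [Finset.sum_range_succ' (fun i => ‖(TK ^ i) x‖) (k+1)]
        simp [pow_zero]
        ring
      linarith
  -- conclude
  set L : ℝ := (c0 + d) * (2 * SN) + 1 with hLdef
  have hL : 0 < L := by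
    have := mul_nonneg (add_nonneg (le_of_lt hc0) hd0) (by linarith : (0:ℝ) ≤ 2 * SN)
    rw [hLdef]; linarith
  have hRle : ∀ k x, R k x ≤ L * ‖x‖ := by
    intro k x
    have h1 : ∑ i ∈ Finset.range (k+1), ‖(TK ^ i) x‖ ≤ (2 * SN) * ‖x‖ := by
      calc ∑ i ∈ Finset.range (k+1), ‖(TK ^ i) x‖
          ≤ ∑ i ∈ Finset.range (k+1), ‖TK ^ i‖ * ‖x‖ :=
            Finset.sum_le_sum fun i _ => (TK ^ i).le_opNorm x
        _ = (∑ i ∈ Finset.range (k+1), ‖TK ^ i‖) * ‖x‖ := by rw [Finset.sum_mul]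
        _ ≤ (2 * SN) * ‖x‖ :=
            mul_le_mul_of_nonneg_right (hpart (k+1)) (norm_nonneg x)
    have h2 : ‖(TK ^ (k+1)) x‖ ≤ (2 * SN) * ‖x‖ := by
      calc ‖(TK ^ (k+1)) x‖ ≤ ‖TK ^ (k+1)‖ * ‖x‖ := (TK ^ (k+1)).le_opNorm x
        _ ≤ (∑ i ∈ Finset.range (k+2), ‖TK ^ i‖) * ‖x‖ := by
            apply mul_le_mul_of_nonneg_right _ (norm_nonneg x)
            apply Finset.single_le_sum (fun i _ => norm_nonneg (TK ^ i))
            simp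
        _ ≤ (2 * SN) * ‖x‖ :=
            mul_le_mul_of_nonneg_right (hpart (k+2)) (norm_nonneg x)
    have := norm_nonneg x
    calc R k x ≤ c0 * ((2*SN)*‖x‖) + d * ((2*SN)*‖x‖) := by
          apply add_le_add
          · exact mul_le_mul_of_nonneg_left h1 (le_of_lt hc0)
          · exact mul_le_mul_of_nonneg_left h2 hd0
      _ = ((c0 + d) * (2 * SN)) * ‖x‖ := by ring
      _ ≤ L * ‖x‖ := by
          apply mul_le_mul_of_nonneg_right _ (norm_nonneg x)
          rw [hLdef]; linarith
  refine ⟨L⁻¹, inv_pos.2 hL, fun k x hx => ?_⟩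
  rw [Metric.mem_ball, dist_zero_right] at hx
  apply hkey k x
  calc R k x ≤ L * ‖x‖ := hRle k x
    _ ≤ L * L⁻¹ := mul_le_mul_of_nonneg_left (le_of_lt hx) (le_of_lt hL)
    _ = 1 := mul_inv_cancel₀ (ne_of_gt hL)

end Ball

section Helpers
variable {E : Type*} [NormedAddCommGroup E] [InnerProductSpace ℝ E]

lemma zero_mem_interior_of_ball {X : Set E} {ε : ℝ} (hε : 0 < ε)
    (h : Metric.ball 0 ε ⊆ X) : (0:E) ∈ interior X :=
  mem_interior.2 ⟨Metric.ball 0 ε, h, Metric.isOpen_ball, Metric.mem_ball_self hε⟩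

lemma polar_compact [ProperSpace E] {X : Set E} {ρ : ℝ} (hρ : 0 < ρ)
    (hball : Metric.ball 0 ρ ⊆ X) : IsCompact (polarSet X) := by
  apply Metric.isCompact_of_isClosed_isBounded isClosed_polarSet
  rw [Metric.isBounded_iff_subset_closedBall 0]
  exact ⟨1/ρ, fun c hc => by
    rw [Metric.mem_closedBall, dist_zero_right]
    exact norm_le_of_mem_polarSet hρ hball hc⟩

lemma convex_iUnion_of_monotone {X : ℕ → Set E} (hmono : Monotone X)
    (hcv : ∀ k, Convex ℝ (X k)) : Convex ℝ (⋃ k, X k) := by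
  intro a ha b hb t s ht hs hts
  obtain ⟨i, hai⟩ := Set.mem_iUnion.1 ha
  obtain ⟨j, hbj⟩ := Set.mem_iUnion.1 hb
  exact Set.mem_iUnion.2 ⟨max i j,
    hcv (max i j) (hmono (le_max_left i j) hai) (hmono (le_max_right i j) hbj) ht hs hts⟩

end Helpers

def PxL2 : Rsp2 n m →ₗ[ℝ] Rsp m where
  toFun := fun w => w.snd
  map_add' := fun _ _ => rfl
  map_smul' := fun _ _ => rfl

lemma continuous_snd2 : Continuous (fun w : Rsp2 n m => w.snd) :=
  LinearMap.continuous_of_finiteDimensional (PxL2 (n := n) (m := m))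

lemma continuous_mkW (x : Rsp n) : Continuous (fun u : Rsp m => mkW x u) := by
  have h : Continuous (fun u : Rsp m =>
      (WithLp.prodContinuousLinearEquiv 2 ℝ (Rsp n) (Rsp m)).symm (x, u)) :=
    (WithLp.prodContinuousLinearEquiv 2 ℝ (Rsp n) (Rsp m)).symm.continuous.comp
      (continuous_const.prodMk continuous_id)
  exact h


/-- convergence of both 𝒫_k and 𝒯_k, with the limits satisfying
𝒯_∞ = (𝒞* ⊕ Mᵀ𝒫_∞*)*, 𝒫_∞ = P_x𝒯_∞, so 𝒫_∞ solves the fixed-point set equation. -/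
theorem stmt_15 (n m : ℕ) (A : Matrix (Fin n) (Fin n) ℝ) (B : Matrix (Fin n) (Fin m) ℝ)
    (hstab : ∃ K : Matrix (Fin m) (Fin n) ℝ,
      Tendsto (fun k : ℕ => (A + B * K) ^ k) atTop (nhds 0))
    (C : Set (Rsp2 n m)) (hC : IsProperCSet C)
    (S : Set (Rsp n)) (hS : IsCSet S)
    (T : ℕ → Set (Rsp2 n m)) (P : ℕ → Set (Rsp n))
    (hT0 : T 0 = polarSet (polarSet C + Mtr A B '' S))
    (hP0 : P 0 = Pxproj '' T 0)
    (hTs : ∀ k : ℕ, T (k + 1) = polarSet (polarSet C + Mtr A B '' polarSet (P k)))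
    (hPs : ∀ k : ℕ, P (k + 1) = Pxproj '' T (k + 1))
    (hmono : S ⊆ polarSet (P 0) ∨ polarSet (P 0) ⊆ S) :
    ∃ (Pinf : Set (Rsp n)) (Tinf : Set (Rsp2 n m)),
      IsProperCSet Pinf ∧ IsProperCSet Tinf ∧
      Tendsto (fun k : ℕ => Metric.hausdorffDist (P k) Pinf) atTop (nhds 0) ∧
      Tendsto (fun k : ℕ => Metric.hausdorffDist (T k) Tinf) atTop (nhds 0) ∧
      Tinf = polarSet (polarSet C + Mtr A B '' polarSet Pinf) ∧
      Pinf = Pxproj '' Tinf ∧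
      Pinf = Pxproj '' polarSet (polarSet C + Mtr A B '' polarSet Pinf) := by
  obtain ⟨K, htend⟩ := hstab
  have hPx : ∀ k, P k = Pxproj '' T k := by
    intro k; cases k with
    | zero => exact hP0
    | succ k => exact hPs k
  have hTD' : ∀ k, T k = polarSet (polarSet C + Mtr A B '' Dseq S P k) := hTD A B hT0 hTs
  have hS0 : (0:Rsp n) ∈ S := hS.2.2
  have hTb := T_basic A B hC hS0 hTD'
  have hPb := P_basic A B hC hS0 hTD' hPx
  obtain ⟨ε, hε, hballP⟩ := inner_ball A B hC hS hTD' hPx K htend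
  have hCcl : IsClosed C := hC.1.1.isClosed
  have hCbip : polarSet (polarSet C) = C := bipolar hCcl hC.1.2.1 hC.1.2.2
  obtain ⟨ρ, hρpos, hballC⟩ : ∃ ρ > 0, Metric.ball (0 : Rsp2 n m) ρ ⊆ C := by
    obtain ⟨U, hUC, hUopen, hU0⟩ := mem_interior.1 hC.2
    obtain ⟨ρ, hρpos, hB⟩ := Metric.isOpen_iff.1 hUopen 0 hU0
    exact ⟨ρ, hρpos, hB.trans hUC⟩
  have hCpolar_compact : IsCompact (polarSet C) := polar_compact hρpos hballC
  -- polar of each P k is compact, bounded by 1/ε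
  have hpolarPk_bd : ∀ k, ∀ y ∈ polarSet (P k), ‖y‖ ≤ 1/ε :=
    fun k y hy => norm_le_of_mem_polarSet hε (hballP k) hy
  have hpolarPk_compact : ∀ k, IsCompact (polarSet (P k)) :=
    fun k => polar_compact hε (hballP k)
  have hPbip : ∀ k, polarSet (polarSet (P k)) = P k :=
    fun k => bipolar (hPb k).1.isClosed (hPb k).2.1 (hPb k).2.2
  -- uniform small ball inside all T k
  obtain ⟨d, hd0, hdS⟩ : ∃ d ≥ 0, ∀ s ∈ S, ‖s‖ ≤ d := by
    obtain ⟨r, hr⟩ := (Metric.isBounded_iff_subset_closedBall 0).1 hS.1.isBounded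
    refine ⟨max r 0, le_max_right _ _, fun s hs => ?_⟩
    have := hr hs
    rw [Metric.mem_closedBall, dist_zero_right] at this
    exact this.trans (le_max_left _ _)
  have hDbd : ∀ k, ∀ y ∈ Dseq S P k, ‖y‖ ≤ max d (1/ε) := by
    intro k y hy
    cases k with
    | zero => exact (hdS y hy).trans (le_max_left _ _)
    | succ k => exact (hpolarPk_bd k y hy).trans (le_max_right _ _)
  set R3 : ℝ := 1/ρ + ‖MtrCLM A B‖ * max d (1/ε) with hR3def
  have hR3pos : 0 < R3 := by
    rw [hR3def]
    have h1 : 0 < 1/ρ := by positivity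
    have h2 : 0 ≤ ‖MtrCLM A B‖ * max d (1/ε) :=
      mul_nonneg (norm_nonneg _) (le_trans hd0 (le_max_left _ _))
    linarith
  have hballT : ∀ k, Metric.ball (0 : Rsp2 n m) (1/R3) ⊆ T k := by
    intro k
    rw [hTD' k]
    apply ball_subset_polarSet hR3pos
    intro z hz
    rcases Set.mem_add.1 hz with ⟨c, hc, w', ⟨p, hp, rfl⟩, rfl⟩
    have h1 : ‖c‖ ≤ 1/ρ := norm_le_of_mem_polarSet hρpos hballC hc
    have h2 : ‖Mtr A B p‖ ≤ ‖MtrCLM A B‖ * max d (1/ε) := by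
      calc ‖Mtr A B p‖ = ‖MtrCLM A B p‖ := rfl
        _ ≤ ‖MtrCLM A B‖ * ‖p‖ := (MtrCLM A B).le_opNorm p
        _ ≤ ‖MtrCLM A B‖ * max d (1/ε) :=
            mul_le_mul_of_nonneg_left (hDbd k p hp) (norm_nonneg _)
    calc ‖c + Mtr A B p‖ ≤ ‖c‖ + ‖Mtr A B p‖ := norm_add_le _ _
      _ ≤ R3 := by rw [hR3def]; linarith
  have hR3inv : 0 < 1/R3 := by positivity
  -- bound on C
  obtain ⟨RC, hRC0, hRC⟩ : ∃ RC ≥ 0, ∀ w ∈ C, ‖w‖ ≤ RC := by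
    obtain ⟨r, hr⟩ := (Metric.isBounded_iff_subset_closedBall 0).1 hC.1.1.isBounded
    refine ⟨max r 0, le_max_right _ _, fun w hw => ?_⟩
    have := hr hw
    rw [Metric.mem_closedBall, dist_zero_right] at this
    exact this.trans (le_max_left _ _)
  -- fiber machinery for Pinf = Px '' Tinf (decreasing case)
  rcases hmono with hcase | hcase
  · -- DECREASING CASE
    have hstep : ∀ k, T (k+1) ⊆ T k ∧ P (k+1) ⊆ P k := by
      intro k
      induction k with
      | zero =>
        have hT1 : T 1 ⊆ T 0 := by
          rw [hTs 0, hT0]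
          apply polarSet_antitone
          exact Set.add_subset_add_left (Set.image_mono hcase)
        exact ⟨hT1, by rw [hPs 0, hP0]; exact Set.image_mono hT1⟩
      | succ k ih =>
        have hT2 : T (k+2) ⊆ T (k+1) := by
          rw [hTs (k+1), hTs k]
          apply polarSet_antitone
          exact Set.add_subset_add_left (Set.image_mono (polarSet_antitone ih.2))
        exact ⟨hT2, by rw [hPs (k+1), hPs k]; exact Set.image_mono hT2⟩
    have hTanti : Antitone T := antitone_nat_of_succ_le fun k => (hstep k).1
    have hPanti : Antitone P := antitone_nat_of_succ_le fun k => (hstep k).2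
    set Pinf := ⋂ k, P k with hPinfdef
    set Tinf := ⋂ k, T k with hTinfdef
    have hballPinf : Metric.ball (0:Rsp n) ε ⊆ Pinf :=
      Set.subset_iInter fun k => hballP k
    have hballTinf : Metric.ball (0:Rsp2 n m) (1/R3) ⊆ Tinf :=
      Set.subset_iInter fun k => hballT k
    have hPinf_proper : IsProperCSet Pinf := by
      refine ⟨⟨?_, convex_iInter fun k => (hPb k).2.1, Set.mem_iInter.2 fun k => (hPb k).2.2⟩,
        zero_mem_interior_of_ball hε hballPinf⟩
      exact IsCompact.of_isClosed_subset (hPb 0).1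
        (isClosed_iInter fun k => (hPb k).1.isClosed) (Set.iInter_subset _ 0)
    have hTinf_proper : IsProperCSet Tinf := by
      refine ⟨⟨?_, convex_iInter fun k => (hTb k).2.1, Set.mem_iInter.2 fun k => (hTb k).2.2.1⟩,
        zero_mem_interior_of_ball hR3inv hballTinf⟩
      exact IsCompact.of_isClosed_subset (hTb 0).1
        (isClosed_iInter fun k => (hTb k).1.isClosed) (Set.iInter_subset _ 0)
    have hPconv : Tendsto (fun k => Metric.hausdorffDist (P k) Pinf) atTop (nhds 0) :=
      haus_decreasing P (fun k => (hPb k).1) (fun k => ⟨0, (hPb k).2.2⟩) hPanti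
    have hTconv : Tendsto (fun k => Metric.hausdorffDist (T k) Tinf) atTop (nhds 0) :=
      haus_decreasing T (fun k => (hTb k).1) (fun k => ⟨0, (hTb k).2.2.1⟩) hTanti
    -- fixed point identity for Tinf
    have hpolarPk_sub : ∀ k, polarSet (P k) ⊆ polarSet Pinf :=
      fun k => polarSet_antitone (Set.iInter_subset _ k)
    have hTeq : Tinf = polarSet (polarSet C + Mtr A B '' polarSet Pinf) := by
      apply le_antisymm
      · -- Tinf ⊆ polar (C* + Mtr''polar Pinf)
        intro w hw
        have hwk : ∀ k, w ∈ T k := Set.mem_iInter.1 hw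
        intro z hz
        rcases Set.mem_add.1 hz with ⟨c, hc, w', ⟨q, hq, rfl⟩, rfl⟩
        set y := Mfwd A B w with hydef
        set β : ℝ := 1 - inner ℝ w c with hβdef
        have hkey : ∀ k, ∀ p ∈ polarSet (P k), (inner ℝ p y : ℝ) ≤ β := by
          intro k p hp
          have hmem : c + Mtr A B p ∈ polarSet C + Mtr A B '' polarSet (P k) :=
            Set.mem_add.2 ⟨c, hc, Mtr A B p, ⟨p, hp, rfl⟩, rfl⟩
          have hle := (hTD' (k+1) ▸ hwk (k+1)) _ hmem
          rw [inner_add_right, inner_Mtr, ← hydef] at hle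
          have hcomm : (inner ℝ p y : ℝ) = inner ℝ y p := real_inner_comm _ _
          rw [hβdef]
          linarith
        have hβ0 : (0:ℝ) ≤ β := by
          have := hkey 0 0 zero_mem_polarSet
          rw [inner_zero_left] at this
          linarith
        rw [inner_add_right, inner_Mtr, ← hydef]
        rcases eq_or_lt_of_le hβ0 with hβ | hβ
        · -- boundary case: y must vanish
          have hy0 : y = 0 := by
            by_contra hy
            obtain ⟨RP, hRP0, hRP⟩ : ∃ RP > 0, ∀ x ∈ P 0, ‖x‖ ≤ RP := by
              obtain ⟨r, hr⟩ := (Metric.isBounded_iff_subset_closedBall 0).1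
                (hPb 0).1.isBounded
              refine ⟨max r 1, lt_of_lt_of_le zero_lt_one (le_max_right _ _),
                fun x hx => ?_⟩
              have := hr hx
              rw [Metric.mem_closedBall, dist_zero_right] at this
              exact this.trans (le_max_left _ _)
            have hyn : 0 < ‖y‖ := norm_pos_iff.2 hy
            set p := (1/(2*RP*‖y‖)) • y with hpdef
            have hpmem : p ∈ polarSet (P 0) := by
              apply ball_subset_polarSet hRP0 hRP
              have hnorm : ‖p‖ = 1/(2*RP) := by
                rw [hpdef, norm_smul, Real.norm_eq_abs, abs_of_pos (by positivity)]
                field_simp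
              rw [Metric.mem_ball, dist_zero_right, hnorm]
              exact one_div_lt_one_div_of_lt hRP0 (by linarith)
            have hc2 := hkey 0 p hpmem
            rw [hpdef, real_inner_smul_left, real_inner_self_eq_norm_sq] at hc2
            have hpos : 0 < 1/(2*RP*‖y‖) * ‖y‖^2 := by positivity
            linarith [hc2, hpos]
          rw [hy0, inner_zero_left]
          have hβ' : β = 1 - inner ℝ w c := hβdef
          linarith [hβ, hβ']
        · -- positive case: use bipolar of each P k
          have hy' : β⁻¹ • y ∈ Pinf := by
            apply Set.mem_iInter.2
            intro k
            rw [← hPbip k]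
            intro p hp
            have h1 := hkey k p hp
            have hcomm : (inner ℝ (β⁻¹ • y) p : ℝ) = β⁻¹ * inner ℝ p y := by
              rw [real_inner_smul_left, real_inner_comm]
            rw [hcomm, inv_mul_le_iff₀ hβ, mul_one]
            exact h1
          have h2 := hq _ hy'
          rw [real_inner_smul_right] at h2
          have h3 : (inner ℝ q y : ℝ) ≤ β := by
            calc (inner ℝ q y : ℝ) = β * (β⁻¹ * inner ℝ q y) := by field_simp
              _ ≤ β * 1 := mul_le_mul_of_nonneg_left h2 (le_of_lt hβ)
              _ = β := mul_one β
          have hcomm : (inner ℝ y q : ℝ) = inner ℝ q y := real_inner_comm _ _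
          rw [hβdef] at h3
          linarith
      · -- polar (C* + Mtr''polar Pinf) ⊆ Tinf
        apply Set.subset_iInter
        intro k
        rw [hTD' k]
        apply polarSet_antitone
        apply Set.add_subset_add_left
        apply Set.image_mono
        cases k with
        | zero => exact hcase.trans (hpolarPk_sub 0)
        | succ k => exact hpolarPk_sub k
    have hPeq : Pinf = Pxproj '' Tinf := by
      apply le_antisymm
      · -- uses fiber compactness
        intro x hx
        have hxk : ∀ k, x ∈ P k := Set.mem_iInter.1 hx
        set F : ℕ → Set (Rsp m) := fun k => {u | mkW x u ∈ T k} with hFdef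
        have hFne : ∀ k, (F k).Nonempty := by
          intro k
          obtain ⟨w, hw, hwx⟩ := (hPx k ▸ hxk k)
          refine ⟨w.snd, ?_⟩
          have : mkW x w.snd = w := by rw [← hwx]; rfl
          simpa [hFdef, this] using hw
        have hFcl : ∀ k, IsClosed (F k) :=
          fun k => (hTb k).1.isClosed.preimage (continuous_mkW x)
        have hFc0 : IsCompact (F 0) := by
          apply IsCompact.of_isClosed_subset ((hTb 0).1.image continuous_snd2) (hFcl 0)
          intro u hu
          exact ⟨mkW x u, hu, rfl⟩
        have hFanti : ∀ k, F (k+1) ⊆ F k := fun k u hu => (hstep k).1 hu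
        obtain ⟨u, hu⟩ :=
          IsCompact.nonempty_iInter_of_sequence_nonempty_isCompact_isClosed F hFanti hFne
            hFc0 hFcl
        refine ⟨mkW x u, Set.mem_iInter.2 fun k => Set.mem_iInter.1 hu k, rfl⟩
      · intro z hz
        rcases hz with ⟨w, hw, rfl⟩
        apply Set.mem_iInter.2
        intro k
        rw [hPx k]
        exact ⟨w, Set.mem_iInter.1 hw k, rfl⟩
    refine ⟨Pinf, Tinf, hPinf_proper, hTinf_proper, hPconv, hTconv, hTeq, hPeq, ?_⟩
    rw [← hTeq]; exact hPeq
  · -- INCREASING CASE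
    have hstep : ∀ k, T k ⊆ T (k+1) ∧ P k ⊆ P (k+1) := by
      intro k
      induction k with
      | zero =>
        have hT1 : T 0 ⊆ T 1 := by
          rw [hTs 0, hT0]
          apply polarSet_antitone
          exact Set.add_subset_add_left (Set.image_mono hcase)
        exact ⟨hT1, by rw [hPs 0, hP0]; exact Set.image_mono hT1⟩
      | succ k ih =>
        have hT2 : T (k+1) ⊆ T (k+2) := by
          rw [hTs (k+1), hTs k]
          apply polarSet_antitone
          exact Set.add_subset_add_left (Set.image_mono (polarSet_antitone ih.2))
        exact ⟨hT2, by rw [hPs (k+1), hPs k]; exact Set.image_mono hT2⟩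
    have hTmono : Monotone T := monotone_nat_of_le_succ fun k => (hstep k).1
    have hPmono : Monotone P := monotone_nat_of_le_succ fun k => (hstep k).2
    set Pinf := closure (⋃ k, P k) with hPinfdef
    set Tinf := closure (⋃ k, T k) with hTinfdef
    have hTU_bd : Bornology.IsBounded (⋃ k, T k) :=
      (hC.1.1.isBounded).subset (Set.iUnion_subset fun k => (hTb k).2.2.2)
    have hPU_bd : Bornology.IsBounded (⋃ k, P k) := by
      rw [Metric.isBounded_iff_subset_closedBall 0]
      refine ⟨RC, ?_⟩
      apply Set.iUnion_subset
      intro k x hx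
      rcases (hPx k ▸ hx) with ⟨w, hw, rfl⟩
      rw [Metric.mem_closedBall, dist_zero_right]
      exact (fst_norm_le w).trans (hRC w ((hTb k).2.2.2 hw))
    have hTinf_c : IsCompact Tinf :=
      Metric.isCompact_of_isClosed_isBounded isClosed_closure hTU_bd.closure
    have hPinf_c : IsCompact Pinf :=
      Metric.isCompact_of_isClosed_isBounded isClosed_closure hPU_bd.closure
    have hPinf_proper : IsProperCSet Pinf := by
      refine ⟨⟨hPinf_c,
        (convex_iUnion_of_monotone hPmono fun k => (hPb k).2.1).closure,
        subset_closure (Set.mem_iUnion.2 ⟨0, (hPb 0).2.2⟩)⟩,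
        zero_mem_interior_of_ball hε ?_⟩
      exact (hballP 0).trans ((Set.subset_iUnion P 0).trans subset_closure)
    have hTinf_proper : IsProperCSet Tinf := by
      refine ⟨⟨hTinf_c,
        (convex_iUnion_of_monotone hTmono fun k => (hTb k).2.1).closure,
        subset_closure (Set.mem_iUnion.2 ⟨0, (hTb 0).2.2.1⟩)⟩,
        zero_mem_interior_of_ball hR3inv ?_⟩
      exact (hballT 0).trans ((Set.subset_iUnion T 0).trans subset_closure)
    have hPconv : Tendsto (fun k => Metric.hausdorffDist (P k) Pinf) atTop (nhds 0) :=
      haus_increasing P (fun k => (hPb k).1) (fun k => ⟨0, (hPb k).2.2⟩) hPmono hPU_bd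
    have hTconv : Tendsto (fun k => Metric.hausdorffDist (T k) Tinf) atTop (nhds 0) :=
      haus_increasing T (fun k => (hTb k).1) (fun k => ⟨0, (hTb k).2.2.1⟩) hTmono hTU_bd
    have hpolarPinf : polarSet Pinf = ⋂ k, polarSet (P k) := by
      rw [hPinfdef, polarSet_closure_eq, polarSet_union_eq]
    have hpolarPinf_sub : ∀ k, polarSet Pinf ⊆ polarSet (P k) := by
      intro k
      rw [hpolarPinf]
      exact Set.iInter_subset _ k
    -- Tinf ⊆ polar (C* + Mtr '' polar Pinf)
    have hTsubX : ∀ k, T k ⊆ polarSet (polarSet C + Mtr A B '' polarSet Pinf) := by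
      have hsucc : ∀ k, T (k+1) ⊆ polarSet (polarSet C + Mtr A B '' polarSet Pinf) := by
        intro k
        rw [hTs k]
        apply polarSet_antitone
        exact Set.add_subset_add_left (Set.image_mono (hpolarPinf_sub k))
      intro k
      cases k with
      | zero => exact (hstep 0).1.trans (hsucc 0)
      | succ k => exact hsucc k
    have hdir1 : Tinf ⊆ polarSet (polarSet C + Mtr A B '' polarSet Pinf) :=
      closure_minimal (Set.iUnion_subset hTsubX) isClosed_polarSet
    -- polar Tinf ⊆ C* + Mtr '' polar Pinf
    have hZk : ∀ k, IsCompact (polarSet C + Mtr A B '' polarSet (P k)) ∧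
        Convex ℝ (polarSet C + Mtr A B '' polarSet (P k)) ∧
        (0 : Rsp2 n m) ∈ polarSet C + Mtr A B '' polarSet (P k) := by
      intro k
      refine ⟨hCpolar_compact.add ((hpolarPk_compact k).image (continuous_Mtr A B)),
        convex_polarSet.add (convex_polarSet.linear_image (MtrL A B)), ?_⟩
      exact Set.mem_add.2 ⟨0, zero_mem_polarSet,
        0, ⟨0, zero_mem_polarSet, Mtr_zero A B⟩, add_zero 0⟩
    have hTbip : ∀ k, polarSet (T (k+1)) = polarSet C + Mtr A B '' polarSet (P k) := by
      intro k
      rw [hTs k]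
      exact bipolar (hZk k).1.isClosed (hZk k).2.1 (hZk k).2.2
    have hsub2 : polarSet Tinf ⊆ polarSet C + Mtr A B '' polarSet Pinf := by
      intro z hz
      have hzk : ∀ k, ∃ c ∈ polarSet C, ∃ p ∈ polarSet (P k), c + Mtr A B p = z := by
        intro k
        have h1 : z ∈ polarSet (T (k+1)) :=
          polarSet_antitone ((Set.subset_iUnion T (k+1)).trans subset_closure) hz
        rw [hTbip k] at h1
        rcases Set.mem_add.1 h1 with ⟨c, hc, w', ⟨p, hp, rfl⟩, h⟩
        exact ⟨c, hc, p, hp, h⟩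
      choose c hc p hp hz2 using hzk
      have hp0 : ∀ k, p k ∈ polarSet (P 0) :=
        fun k => polarSet_antitone (hPmono (Nat.zero_le k)) (hp k)
      obtain ⟨q, hq0, φ, hφ, hconv⟩ := (hpolarPk_compact 0).tendsto_subseq hp0
      have hqj : ∀ j, q ∈ polarSet (P j) := by
        intro j
        apply isClosed_polarSet.mem_of_tendsto hconv
        filter_upwards [eventually_ge_atTop j] with i hi
        exact polarSet_antitone (hPmono (hi.trans hφ.le_apply)) (hp (φ i))
      have hqPinf : q ∈ polarSet Pinf := by
        rw [hpolarPinf]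
        exact Set.mem_iInter.2 hqj
      have hctend : Tendsto (fun i => c (φ i)) atTop (nhds (z - Mtr A B q)) := by
        have h1 : ∀ i, c (φ i) = z - Mtr A B (p (φ i)) :=
          fun i => eq_sub_of_add_eq (hz2 (φ i))
        have h2 : Tendsto (fun i => z - Mtr A B (p (φ i))) atTop
            (nhds (z - Mtr A B q)) :=
          tendsto_const_nhds.sub (((continuous_Mtr A B).tendsto q).comp hconv)
        exact h2.congr fun i => (h1 i).symm
      have hcq : z - Mtr A B q ∈ polarSet C :=
        isClosed_polarSet.mem_of_tendsto hctend (Eventually.of_forall fun i => hc (φ i))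
      exact Set.mem_add.2 ⟨z - Mtr A B q, hcq, Mtr A B q, ⟨q, hqPinf, rfl⟩, by abel⟩
    have hTinf_bip : polarSet (polarSet Tinf) = Tinf :=
      bipolar isClosed_closure
        (convex_iUnion_of_monotone hTmono fun k => (hTb k).2.1).closure
        (subset_closure (Set.mem_iUnion.2 ⟨0, (hTb 0).2.2.1⟩))
    have hTeq : Tinf = polarSet (polarSet C + Mtr A B '' polarSet Pinf) :=
      le_antisymm hdir1 ((polarSet_antitone hsub2).trans (le_of_eq hTinf_bip))
    have hPUimg : ⋃ k, P k = Pxproj '' ⋃ k, T k := by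
      rw [Set.image_iUnion]
      exact Set.iUnion_congr fun k => hPx k
    have hPeq : Pinf = Pxproj '' Tinf := by
      apply le_antisymm
      · rw [hPinfdef, hPUimg]
        apply closure_minimal
        · exact Set.image_mono subset_closure
        · exact (hTinf_c.image continuous_Pxproj).isClosed
      · calc Pxproj '' Tinf ⊆ closure (Pxproj '' ⋃ k, T k) :=
            image_closure_subset_closure_image continuous_Pxproj
          _ = Pinf := by rw [hPinfdef, hPUimg]
    refine ⟨Pinf, Tinf, hPinf_proper, hTinf_proper, hPconv, hTconv, hTeq, hPeq, ?_⟩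
    rw [← hTeq]; exact hPeq
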